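/- Let s_n denote the number of independent dominating sets of the ortho-chain square cactus S_n. Then for every n ≥ 2, s_n = 2·s_{n-1}. -/
import Mathlib


/-- `S` is an independent dominating set of `G`: pairwise non-adjacent, and every
vertex outside `S` has a neighbour in `S`. -/
def IsIndepDomSet {V : Type*} (G : SimpleGraph V) (S : Finset V) : Prop :=
  (∀ v ∈ S, ∀ w ∈ S, ¬ G.Adj v w) ∧ ∀ v, v ∉ S → ∃ w ∈ S, G.Adj v w

/-- The ortho-chain square cactus `S n`: `Sum.inl i` is the cut vertex `x i`
(`0 ≤ i ≤ n`), `Sum.inr (Sum.inl k)` is `y (k+1)` and `Sum.inr (Sum.inr k)` is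
`z (k+1)` (`0 ≤ k ≤ n-1`); the `i`-th square (`1 ≤ i ≤ n`) is the four-cycle
`x (i-1) – x i – y i – z i – x (i-1)`. -/
def orthoSq (n : ℕ) : SimpleGraph (Fin (n + 1) ⊕ (Fin n ⊕ Fin n)) :=
  SimpleGraph.fromRel fun p q =>
    match p, q with
    | Sum.inl i, Sum.inl j => (i : ℕ) + 1 = (j : ℕ)
    | Sum.inl i, Sum.inr (Sum.inl k) => (i : ℕ) = (k : ℕ) + 1
    | Sum.inl i, Sum.inr (Sum.inr k) => (i : ℕ) = (k : ℕ)
    | Sum.inr (Sum.inl k), Sum.inr (Sum.inr k') => k = k'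
    | _, _ => False

/-- The number of independent dominating sets of the ortho-chain square cactus `S n`. -/
noncomputable def numIDSOrthoSq (n : ℕ) : ℕ :=
  Nat.card {S : Finset (Fin (n + 1) ⊕ (Fin n ⊕ Fin n)) // IsIndepDomSet (orthoSq n) S}

-- extend b to ℕ
def extb {n : ℕ} (b : Fin n → Bool) (m : ℕ) : Bool := if h : m < n then b ⟨m, h⟩ else false

lemma extb_coe {n : ℕ} (b : Fin n → Bool) (k : Fin n) : extb b (k : ℕ) = b k := by
  simp [extb, k.isLt]

def memB (n : ℕ) (b : Fin n → Bool) : Fin (n + 1) ⊕ (Fin n ⊕ Fin n) → Bool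
  | .inl j => (decide ((j : ℕ) = 0) || !(extb b ((j : ℕ) - 1))) && (decide ((j : ℕ) = n) || extb b (j : ℕ))
  | .inr (.inl k) => b k
  | .inr (.inr k) => !(b k)

def idsSet (n : ℕ) (b : Fin n → Bool) : Finset (Fin (n + 1) ⊕ (Fin n ⊕ Fin n)) :=
  Finset.univ.filter (fun v => memB n b v = true)

lemma mem_inl {n b} (j : Fin (n+1)) : Sum.inl j ∈ idsSet n b ↔
    (((j:ℕ) = 0 ∨ extb b ((j:ℕ)-1) = false) ∧ ((j:ℕ) = n ∨ extb b (j:ℕ) = true)) := by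
  simp [idsSet, memB]

lemma mem_y {n b} (k : Fin n) : Sum.inr (Sum.inl k) ∈ idsSet n b ↔ b k = true := by
  simp [idsSet, memB]

lemma mem_z {n b} (k : Fin n) : Sum.inr (Sum.inr k) ∈ idsSet n b ↔ b k = false := by
  simp [idsSet, memB]

example (n : ℕ) (i j : Fin (n+1)) : (orthoSq n).Adj (Sum.inl i) (Sum.inl j) ↔
    Sum.inl i ≠ (Sum.inl j : Fin (n+1) ⊕ (Fin n ⊕ Fin n)) ∧ ((i:ℕ)+1 = j ∨ (j:ℕ)+1 = i) := by
  simp [orthoSq, SimpleGraph.fromRel_adj]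

lemma idsSet_isIDS (n : ℕ) (b : Fin n → Bool) : IsIndepDomSet (orthoSq n) (idsSet n b) := by
  constructor
  · rintro (i | k | k) hv (j | k' | k') hw hadj <;>
      simp only [orthoSq, SimpleGraph.fromRel_adj, ne_eq] at hadj <;>
      [skip; skip; skip; skip; skip; skip; skip; skip; skip] <;>
      first
      | exact hadj.2.elim id id
      | skip
    -- remaining cases with nontrivial relation
    · -- inl i, inl j
      rw [mem_inl] at hv hw
      have hij : (i:ℕ)+1 = j ∨ (j:ℕ)+1 = i := hadj.2
      rcases hij with h | h
      · have h1 : (i:ℕ) < n := by have := j.isLt; omega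
        have h2 := hv.2.resolve_left (by omega)
        have h3 := hw.1.resolve_left (by omega)
        rw [show (j:ℕ) - 1 = (i:ℕ) by omega] at h3
        rw [h2] at h3; exact absurd h3 (by simp)
      · have h1 : (j:ℕ) < n := by have := i.isLt; omega
        have h2 := hw.2.resolve_left (by omega)
        have h3 := hv.1.resolve_left (by omega)
        rw [show (i:ℕ) - 1 = (j:ℕ) by omega] at h3
        rw [h2] at h3; exact absurd h3 (by simp)
    · -- inl i, inr inl k'
      rw [mem_inl] at hv; rw [mem_y] at hw
      have h : (i:ℕ) = (k':ℕ) + 1 := hadj.2.resolve_right id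
      have h3 := hv.1.resolve_left (by omega)
      rw [show (i:ℕ) - 1 = (k':ℕ) by omega, extb_coe, hw] at h3
      exact absurd h3 (by simp)
    · -- inl i, inr inr k'
      rw [mem_inl] at hv; rw [mem_z] at hw
      have h : (i:ℕ) = (k':ℕ) := hadj.2.resolve_right id
      have h3 := hv.2.resolve_left (by have := k'.isLt; omega)
      rw [h, extb_coe, hw] at h3
      exact absurd h3 (by simp)
    · -- inr inl k, inl j
      rw [mem_y] at hv; rw [mem_inl] at hw
      have h : (j:ℕ) = (k:ℕ) + 1 := hadj.2.resolve_left id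
      have h3 := hw.1.resolve_left (by omega)
      rw [show (j:ℕ) - 1 = (k:ℕ) by omega, extb_coe, hv] at h3
      exact absurd h3 (by simp)
    · -- inr inl k, inr inr k'
      rw [mem_y] at hv; rw [mem_z] at hw
      have h : k = k' := hadj.2.resolve_right id
      rw [h, hw] at hv; exact absurd hv (by simp)
    · -- inr inr k, inl j
      rw [mem_z] at hv; rw [mem_inl] at hw
      have h : (j:ℕ) = (k:ℕ) := hadj.2.resolve_left id
      have h3 := hw.2.resolve_left (by have := k.isLt; omega)
      rw [h, extb_coe, hv] at h3
      exact absurd h3 (by simp)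
    · -- inr inr k, inr inl k'
      rw [mem_z] at hv; rw [mem_y] at hw
      have h : k' = k := hadj.2.resolve_left id
      rw [← h, hw] at hv; exact absurd hv (by simp)
  · rintro (j | k | k) hv
    · rw [mem_inl] at hv
      push_neg at hv
      by_cases h0 : ((j:ℕ) = 0 ∨ extb b ((j:ℕ)-1) = false)
      · -- second conjunct fails: j ≠ n and extb b j = false
        have h2 := hv h0
        obtain ⟨hjn, hbj⟩ := h2
        have hjlt : (j:ℕ) < n := by have := j.isLt; omega
        refine ⟨Sum.inr (Sum.inr ⟨(j:ℕ), hjlt⟩), ?_, ?_⟩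
        · rw [mem_z]
          have := hbj
          rw [show extb b (j:ℕ) = b ⟨(j:ℕ), hjlt⟩ by simp [extb, hjlt]] at this
          simpa using this
        · simp [orthoSq, SimpleGraph.fromRel_adj]
      · push_neg at h0
        obtain ⟨hj0, hb⟩ := h0
        have hjlt : (j:ℕ) - 1 < n := by have := j.isLt; omega
        refine ⟨Sum.inr (Sum.inl ⟨(j:ℕ)-1, hjlt⟩), ?_, ?_⟩
        · rw [mem_y]
          rw [show extb b ((j:ℕ)-1) = b ⟨(j:ℕ)-1, hjlt⟩ by simp [extb, hjlt]] at hb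
          rcases Bool.eq_false_or_eq_true (b ⟨(j:ℕ)-1, hjlt⟩) with h | h
          · exact h
          · exact absurd h hb
        · simp only [orthoSq, SimpleGraph.fromRel_adj]
          refine ⟨by simp, Or.inl ?_⟩
          show (j:ℕ) = (j:ℕ) - 1 + 1
          omega
    · rw [mem_y] at hv
      have hb : b k = false := by simpa using hv
      refine ⟨Sum.inr (Sum.inr k), (mem_z k).2 hb, ?_⟩
      simp [orthoSq, SimpleGraph.fromRel_adj]
    · rw [mem_z] at hv
      have hb : b k = true := by simpa using hv
      refine ⟨Sum.inr (Sum.inl k), (mem_y k).2 hb, ?_⟩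
      simp [orthoSq, SimpleGraph.fromRel_adj]

section surj
variable {n : ℕ} {S : Finset (Fin (n + 1) ⊕ (Fin n ⊕ Fin n))} (hS : IsIndepDomSet (orthoSq n) S)

include hS

lemma yz (k : Fin n) : Sum.inr (Sum.inl k) ∈ S ↔ Sum.inr (Sum.inr k) ∉ S := by
  constructor
  · intro hy hz
    exact hS.1 _ hy _ hz (by simp [orthoSq, SimpleGraph.fromRel_adj])
  · intro hz
    by_contra hy
    obtain ⟨w, hw, hadj⟩ := hS.2 _ hy
    rcases w with j | k' | k'
    · -- x_j adjacent to y_k: j = k+1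
      have hj : (j:ℕ) = (k:ℕ) + 1 := by
        simp only [orthoSq, SimpleGraph.fromRel_adj] at hadj
        exact hadj.2.resolve_left id
      -- z_k not in S, so z_k dominated
      obtain ⟨w', hw', hadj'⟩ := hS.2 _ hz
      rcases w' with j' | k'' | k''
      · have hj' : (j':ℕ) = (k:ℕ) := by
          simp only [orthoSq, SimpleGraph.fromRel_adj] at hadj'
          exact hadj'.2.resolve_left id
        -- x_{k} and x_{k+1} both in S, adjacent
        refine hS.1 _ hw' _ hw ?_
        simp only [orthoSq, SimpleGraph.fromRel_adj]
        refine ⟨?_, Or.inl (by omega)⟩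
        simp only [ne_eq, Sum.inl.injEq]
        intro h; rw [h] at hj'; omega
      · -- y adjacent to z: k'' = k, but y_k ∉ S
        have : k'' = k := by
          simp only [orthoSq, SimpleGraph.fromRel_adj] at hadj'
          exact hadj'.2.resolve_left id
        rw [this] at hw'; exact hy hw'
      · simp only [orthoSq, SimpleGraph.fromRel_adj] at hadj'
        exact hadj'.2.elim id id
    · simp only [orthoSq, SimpleGraph.fromRel_adj] at hadj
      exact hadj.2.elim id id
    · have : k = k' := by
        simp only [orthoSq, SimpleGraph.fromRel_adj] at hadj
        exact hadj.2.resolve_right id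
      rw [← this] at hw; exact hz hw

lemma xmem_left (j : Fin (n+1)) (hj : Sum.inl j ∈ S) (h0 : (j:ℕ) ≠ 0) :
    Sum.inr (Sum.inl (⟨(j:ℕ)-1, by have := j.isLt; omega⟩ : Fin n)) ∉ S := by
  intro hy
  refine hS.1 _ hj _ hy ?_
  simp only [orthoSq, SimpleGraph.fromRel_adj]
  refine ⟨by simp, Or.inl ?_⟩
  show (j:ℕ) = (j:ℕ) - 1 + 1
  omega

lemma xmem_right (j : Fin (n+1)) (hj : Sum.inl j ∈ S) (hn : (j:ℕ) ≠ n) :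
    Sum.inr (Sum.inr (⟨(j:ℕ), by have := j.isLt; omega⟩ : Fin n)) ∉ S := by
  intro hz
  refine hS.1 _ hj _ hz ?_
  simp only [orthoSq, SimpleGraph.fromRel_adj]
  exact ⟨by simp, Or.inl trivial⟩

lemma xmem_iff (j : Fin (n+1)) :
    Sum.inl j ∈ S ↔
      (((j:ℕ) = 0 ∨ ∀ h : (j:ℕ)-1 < n, Sum.inr (Sum.inl (⟨(j:ℕ)-1, h⟩ : Fin n)) ∉ S) ∧
       ((j:ℕ) = n ∨ ∀ h : (j:ℕ) < n, Sum.inr (Sum.inr (⟨(j:ℕ), h⟩ : Fin n)) ∉ S)) := by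
  constructor
  · intro hj
    constructor
    · by_cases h0 : (j:ℕ) = 0
      · exact Or.inl h0
      · exact Or.inr fun h => xmem_left hS j hj h0
    · by_cases hn : (j:ℕ) = n
      · exact Or.inl hn
      · exact Or.inr fun h => xmem_right hS j hj hn
  · rintro ⟨h1, h2⟩
    by_contra hj
    obtain ⟨w, hw, hadj⟩ := hS.2 _ hj
    rcases w with i | k | k
    · have hij : (i:ℕ)+1 = (j:ℕ) ∨ (j:ℕ)+1 = (i:ℕ) := by
        simp only [orthoSq, SimpleGraph.fromRel_adj] at hadj
        exact hadj.2.symm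
      rcases hij with h | h
      · -- i = j-1 ∈ S; then since i < n, z_i ∉ S, so y_i ∈ S; but h1 forbids y_{j-1}
        have hin : (i:ℕ) ≠ n := by have := j.isLt; omega
        have hz := xmem_right hS i hw hin
        have hy : Sum.inr (Sum.inl (⟨(i:ℕ), by have := j.isLt; omega⟩ : Fin n)) ∈ S := by
          rw [yz hS]; exact hz
        rcases h1 with h0 | h1
        · omega
        · have hlt : (j:ℕ)-1 < n := by have := j.isLt; omega
          refine h1 hlt ?_
          have : (⟨(j:ℕ)-1, hlt⟩ : Fin n) = ⟨(i:ℕ), by have := j.isLt; omega⟩ := by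
            ext; simp; omega
          rw [this]; exact hy
      · -- i = j+1 ∈ S; then y_{i-1} = y_j ∉ S so z_j ∈ S; but h2 forbids z_j
        have hi0 : (i:ℕ) ≠ 0 := by omega
        have hy := xmem_left hS i hw hi0
        have hjn : (j:ℕ) < n := by have := i.isLt; omega
        have hz : Sum.inr (Sum.inr (⟨(j:ℕ), hjn⟩ : Fin n)) ∈ S := by
          have := (yz hS (⟨(j:ℕ), hjn⟩ : Fin n))
          by_contra hzz
          have hyy : Sum.inr (Sum.inl (⟨(j:ℕ), hjn⟩ : Fin n)) ∈ S := by
            by_contra hyn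
            rcases hS.2 _ hzz with ⟨w', hw', hadj'⟩
            -- don't need full arg; use yz instead
            exact hyn (this.mpr hzz)
          refine hy ?_
          have : (⟨(i:ℕ)-1, by have := i.isLt; omega⟩ : Fin n) = ⟨(j:ℕ), hjn⟩ := by
            ext; simp; omega
          rw [this]; exact hyy
        rcases h2 with hn | h2
        · omega
        · exact h2 hjn hz
    · have : (j:ℕ) = (k:ℕ)+1 := by
        simp only [orthoSq, SimpleGraph.fromRel_adj] at hadj
        exact hadj.2.resolve_right id
      rcases h1 with h0 | h1
      · omega
      · have hlt : (j:ℕ)-1 < n := by have := j.isLt; omega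
        refine h1 hlt ?_
        have he : (⟨(j:ℕ)-1, hlt⟩ : Fin n) = k := by ext; simp; omega
        rw [he]; exact hw
    · have : (j:ℕ) = (k:ℕ) := by
        simp only [orthoSq, SimpleGraph.fromRel_adj] at hadj
        exact hadj.2.resolve_right id
      rcases h2 with hn | h2
      · have := k.isLt; omega
      · have hlt : (j:ℕ) < n := by have := k.isLt; omega
        refine h2 hlt ?_
        have he : (⟨(j:ℕ), hlt⟩ : Fin n) = k := by ext; simp; omega
        rw [he]; exact hw

end surj

lemma ids_eq_idsSet {n : ℕ} {S : Finset (Fin (n + 1) ⊕ (Fin n ⊕ Fin n))}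
    (hS : IsIndepDomSet (orthoSq n) S) :
    S = idsSet n (fun k => decide (Sum.inr (Sum.inl k) ∈ S)) := by
  set b : Fin n → Bool := fun k => decide (Sum.inr (Sum.inl k) ∈ S) with hb
  have hbt : ∀ k : Fin n, b k = true ↔ Sum.inr (Sum.inl k) ∈ S := by
    intro k; simp [hb]
  ext v
  rcases v with j | k | k
  · rw [mem_inl, xmem_iff hS]
    constructor
    · rintro ⟨h1, h2⟩
      constructor
      · by_cases h0 : (j:ℕ) = 0
        · exact Or.inl h0
        · rcases h1 with h0' | h1
          · exact absurd h0' h0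
          · right
            have hlt : (j:ℕ) - 1 < n := by have := j.isLt; omega
            rw [show extb b ((j:ℕ)-1) = b ⟨(j:ℕ)-1, hlt⟩ by simp [extb, hlt]]
            rcases Bool.eq_false_or_eq_true (b ⟨(j:ℕ)-1, hlt⟩) with h | h
            · rw [hbt] at h; exact absurd h (h1 hlt)
            · exact h
      · by_cases hn : (j:ℕ) = n
        · exact Or.inl hn
        · rcases h2 with hn' | h2
          · exact absurd hn' hn
          · right
            have hlt : (j:ℕ) < n := by have := j.isLt; omega
            rw [show extb b (j:ℕ) = b ⟨(j:ℕ), hlt⟩ by simp [extb, hlt]]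
            exact (hbt _).2 ((yz hS _).2 (h2 hlt))
    · rintro ⟨h1, h2⟩
      constructor
      · rcases h1 with h0 | h1
        · exact Or.inl h0
        · right; intro hlt hy
          rw [show extb b ((j:ℕ)-1) = b ⟨(j:ℕ)-1, hlt⟩ by simp [extb, hlt]] at h1
          rw [← hbt, h1] at hy; exact absurd hy (by simp)
      · rcases h2 with hn | h2
        · exact Or.inl hn
        · right; intro hlt hz
          rw [show extb b (j:ℕ) = b ⟨(j:ℕ), hlt⟩ by simp [extb, hlt]] at h2
          exact (yz hS _).1 ((hbt _).1 h2) hz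
  · rw [mem_y, hbt]
  · rw [mem_z]
    rw [show (b k = false) ↔ ¬ (b k = true) by simp, hbt]
    constructor
    · intro hz hy; exact (yz hS k).1 hy hz
    · intro hny; by_contra hnz; exact hny ((yz hS k).2 hnz)

lemma numIDS_eq_pow (n : ℕ) :
    Nat.card {S : Finset (Fin (n + 1) ⊕ (Fin n ⊕ Fin n)) // IsIndepDomSet (orthoSq n) S}
      = 2 ^ n := by
  have e : (Fin n → Bool) ≃ {S : Finset (Fin (n + 1) ⊕ (Fin n ⊕ Fin n)) // IsIndepDomSet (orthoSq n) S} :=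
    { toFun := fun b => ⟨idsSet n b, idsSet_isIDS n b⟩
      invFun := fun S k => decide (Sum.inr (Sum.inl k) ∈ S.1)
      left_inv := by
        intro b; funext k
        rcases h : b k with _ | _ <;> simp [mem_y k, h]
      right_inv := by
        intro S
        exact Subtype.ext (ids_eq_idsSet S.2).symm }
  rw [← Nat.card_congr e]
  simp [Nat.card_eq_fintype_card]

/-- For every `n ≥ 2`, the number of independent dominating sets of the ortho-chain
square cactus satisfies `s n = 2 · s (n-1)`. -/
theorem numIDSOrthoSq_recurrence (n : ℕ) (hn : 2 ≤ n) :
    numIDSOrthoSq n = 2 * numIDSOrthoSq (n - 1) := by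
  have h1 : ∀ m : ℕ, numIDSOrthoSq m = 2 ^ m := fun m => numIDS_eq_pow m
  rw [h1, h1]
  obtain ⟨m, rfl⟩ : ∃ m, n = m + 1 := ⟨n - 1, by omega⟩
  simp [pow_succ, Nat.mul_comm]
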